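/- Let P be a finite poset and f : P → ℝ a discrete Morse function with no up-troubled elements, where a is up-troubled if there exist x, y with a < x ≺ y and f(x) < f(y) ≤ f(a). If b ∈ P is critical for f, then f(v) < f(b) for every v < b. -/

import Mathlib

open Finset
open scoped Classical

variable {P : Type*}

/-- `P` is 2-wide: whenever `a ⋖ b ⋖ c` there is `d ≠ b` with `a ⋖ d ⋖ c`. -/
def TwoWide (P : Type*) [PartialOrder P] : Prop :=
  ∀ a b c : P, a ⋖ b → b ⋖ c → ∃ d, d ≠ b ∧ a ⋖ d ∧ d ⋖ c

/-- `f` is a discrete Morse function. -/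
def IsDMF [PartialOrder P] (f : P → ℝ) : Prop :=
  ∀ b : P, {a | a ⋖ b ∧ f b ≤ f a}.Subsingleton ∧ {c | b ⋖ c ∧ f c ≤ f b}.Subsingleton

/-- `b` is (discrete-)critical for `f`. -/
def IsCrit [PartialOrder P] (f : P → ℝ) (b : P) : Prop :=
  (∀ a, a ⋖ b → f a < f b) ∧ (∀ c, b ⋖ c → f b < f c)

/-- `μ` is a parity rank function. -/
def ParityRank [PartialOrder P] (μ : P → ℕ) : Prop :=
  (∀ a, μ a ≤ 1) ∧ (∀ a, IsMin a → μ a = 0) ∧ ∀ a b : P, a ⋖ b → μ b = 1 - μ a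

/-- Sum of `(-1)^(length C)` over all nonempty chains `C` of `P` satisfying `p`. -/
noncomputable def chainSum [PartialOrder P] [Fintype P] (p : Finset P → Prop) : ℤ :=
  ∑ C ∈ Finset.univ.filter
      (fun C : Finset P => C.Nonempty ∧ IsChain (· ≤ ·) (↑C : Set P) ∧ p C),
    (-1 : ℤ) ^ (C.card - 1)

/-- `P` is downward Eulerian with respect to `μ`. -/
def DownEulerian [PartialOrder P] [Fintype P] (μ : P → ℕ) : Prop :=
  ∀ a : P, ¬ IsMin a →
    chainSum (fun C => ∀ x ∈ C, x < a) = (-1 : ℤ) ^ (μ a + 1) + 1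

theorem stmt11 [PartialOrder P] [Fintype P] (f : P → ℝ) (hf : IsDMF f)
    (hup : ¬ ∃ a x y : P, a < x ∧ x ⋖ y ∧ f x < f y ∧ f y ≤ f a)
    (b : P) (hb : IsCrit f b) :
    ∀ v : P, v < b → f v < f b := by
  intro v hvb
  -- find w with v ≤ w ⋖ b
  obtain ⟨w, hw, hwmax⟩ : ∃ m ∈ Finset.univ.filter (fun x => v ≤ x ∧ x < b),
      ∀ x ∈ Finset.univ.filter (fun x => v ≤ x ∧ x < b), ¬ m < x := by
    obtain ⟨m, hm⟩ := Finset.exists_maximal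
      (s := Finset.univ.filter (fun x => v ≤ x ∧ x < b)) ⟨v, by simp [hvb]⟩
    exact ⟨m, hm.1, fun x hx hlt => hlt.not_ge (hm.2 hx hlt.le)⟩
  simp only [Finset.mem_filter, Finset.mem_univ, true_and] at hw
  have hcov : w ⋖ b := by
    refine ⟨hw.2, fun z hwz hzb => ?_⟩
    exact hwmax z (by simp [le_trans hw.1 hwz.le, hzb]) hwz
  rcases eq_or_lt_of_le hw.1 with h | h
  · exact h ▸ hb.1 w hcov
  · by_contra hle
    exact hup ⟨v, w, b, h, hcov, hb.1 w hcov, le_of_not_gt hle⟩
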